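/- arXiv:2004.02846 — 2 statements merged into one kernel-verified Lean document; each statement's English description precedes it below -/
import Mathlib

section
/- Let p be an odd prime, k ≥ 1 and n = p^k. Let E be the free group on generators b_0, …, b_{n−1}, let M = E/(γ_3(E) E^p), let the cyclic group A = ℤ/p^k act on M by the automorphism induced by the cyclic shift b_i ↦ b_{i+1 (indices mod n)}, and let G_k = A ⋉ M; write x ∈ G_k for the element corresponding to the generator 1 ∈ A. Then for every i with 1 ≤ i ≤ 2p^k − 1, the i-th term of the lower p-series of G_k satisfies P_i(G_k) = ⟨x^{p^{i−1}}⟩ · γ_i(G_k), the subgroup generated by the element x^{p^{i−1}} together with γ_i(G_k). -/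
/-- The subgroup of a free group generated by all `p`-th powers. -/
def freePowSubgroup (p : ℕ) (α : Type) : Subgroup (FreeGroup α) :=
  Subgroup.closure (Set.range fun g : FreeGroup α => g ^ p)

instance freePowSubgroup_normal (p : ℕ) (α : Type) : (freePowSubgroup p α).Normal := by
  constructor
  intro n hn g
  induction hn using Subgroup.closure_induction with
  | mem x hx =>
    obtain ⟨h, rfl⟩ := hx
    refine Subgroup.subset_closure ⟨g * h * g⁻¹, ?_⟩
    simp only
    rw [conj_pow]
  | one => simpa using (freePowSubgroup p α).one_mem
  | mul x y _ _ hx hy =>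
    have := (freePowSubgroup p α).mul_mem hx hy
    convert this using 1
    group
  | inv x _ hx =>
    have := (freePowSubgroup p α).inv_mem hx
    convert this using 1
    group

/-- `γ_3(E) E^p` for the free group `E` on `α`. -/
def freeRelSubgroup (p : ℕ) (α : Type) : Subgroup (FreeGroup α) :=
  (⊤ : Subgroup (FreeGroup α)).lowerCentralSeries 2 ⊔ freePowSubgroup p α

instance freeRelSubgroup_normal (p : ℕ) (α : Type) : (freeRelSubgroup p α).Normal :=
  Subgroup.sup_normal _ _

/-- The free class-2-nilpotent exponent-`p` group on `α`, i.e. `E/(γ_3(E) E^p)`. -/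
def FreeClassTwoExpP (p : ℕ) (α : Type) : Type :=
  FreeGroup α ⧸ freeRelSubgroup p α

instance (p : ℕ) (α : Type) : Group (FreeClassTwoExpP p α) :=
  QuotientGroup.Quotient.group _

/-- A free-group automorphism induced by a permutation of the generators maps
`γ_3(E) E^p` onto itself. -/
theorem freeRelSubgroup_map_freeGroupCongr (p : ℕ) (α : Type) (e : Equiv.Perm α) :
    (freeRelSubgroup p α).map (FreeGroup.freeGroupCongr e).toMonoidHom = freeRelSubgroup p α := by
  have key : ∀ f : Equiv.Perm α,
      (freeRelSubgroup p α).map (FreeGroup.freeGroupCongr f).toMonoidHom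
        ≤ freeRelSubgroup p α := by
    intro f
    rw [freeRelSubgroup, Subgroup.map_sup]
    apply sup_le
    · exact le_sup_of_le_left (Subgroup.lowerCentralSeries.map _ 2)
    · rw [freePowSubgroup, MonoidHom.map_closure]
      refine le_sup_of_le_right (Subgroup.closure_le _ |>.mpr ?_)
      rintro x ⟨y, ⟨g, rfl⟩, rfl⟩
      exact Subgroup.subset_closure ⟨FreeGroup.freeGroupCongr f g, by simp⟩
  refine le_antisymm (key e) ?_
  intro x hx
  have hsymm : (FreeGroup.freeGroupCongr e).symm x ∈ freeRelSubgroup p α := by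
    refine key e.symm ⟨x, hx, ?_⟩
    simp [FreeGroup.freeGroupCongr_symm]
  exact ⟨(FreeGroup.freeGroupCongr e).symm x, hsymm,
    (FreeGroup.freeGroupCongr e).apply_symm_apply x⟩

/-- The action of the permutations of the generators on the free class-2 exponent-`p`
group. -/
def permAut (p : ℕ) (α : Type) : Equiv.Perm α →* MulAut (FreeClassTwoExpP p α) where
  toFun e := QuotientGroup.congr (freeRelSubgroup p α) (freeRelSubgroup p α)
    (FreeGroup.freeGroupCongr e) (freeRelSubgroup_map_freeGroupCongr p α e)
  map_one' := by
    ext z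
    refine QuotientGroup.induction_on z fun g => ?_
    show (QuotientGroup.mk (FreeGroup.freeGroupCongr 1 g) : FreeClassTwoExpP p α) = QuotientGroup.mk g
    simp
  map_mul' e f := by
    ext z
    refine QuotientGroup.induction_on z fun g => ?_
    have h : FreeGroup.freeGroupCongr (e * f)
        = (FreeGroup.freeGroupCongr f).trans (FreeGroup.freeGroupCongr e) := by
      rw [FreeGroup.freeGroupCongr_trans]
      rfl
    simp only [h, MulAut.mul_apply]
    rfl

/-- Translation, as a homomorphism from `ℤ/m` to the permutations of `ℤ/m`. -/
def translationHom (m : ℕ) : Multiplicative (ZMod m) →* Equiv.Perm (ZMod m) where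
  toFun t := Equiv.addRight t.toAdd
  map_one' := by ext x; simp
  map_mul' t s := by ext x; simp [Equiv.Perm.mul_apply]; ring

/-- The action of `A = ℤ/p^k` on `M` induced by the cyclic shift `b_i ↦ b_{i+1}` of the
free generators (indices mod `p^k`). -/
def shiftAction' (p m : ℕ) : Multiplicative (ZMod m) →* MulAut (FreeClassTwoExpP p (ZMod m)) :=
  (permAut p (ZMod m)).comp (translationHom m)

/-- The finite `p`-group `G_k = A ⋉ M`. -/
def GkGroup (p k : ℕ) : Type :=
  FreeClassTwoExpP p (ZMod (p ^ k)) ⋊[shiftAction' p (p ^ k)] Multiplicative (ZMod (p ^ k))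

instance (p k : ℕ) : Group (GkGroup p k) := SemidirectProduct.instGroup

/-- The image in `G_k` of the generator `1` of `A = ℤ/p^k`. -/
def GkX (p k : ℕ) : GkGroup p k := SemidirectProduct.inr (Multiplicative.ofAdd (1 : ZMod (p ^ k)))

/-- The images in `G_k` of the generators `b_i` of `M`. -/
def GkB (p k : ℕ) (i : ZMod (p ^ k)) : GkGroup p k :=
  SemidirectProduct.inl (QuotientGroup.mk (FreeGroup.of i))

/-- The lower `p`-series of a group, indexed so that `lowerPSeriesGrp p G i` is the term
`P_{i+1}(G)`:  `P_1(G) = G` and `P_{i+1}(G) = P_i(G)^p [P_i(G), G]`. -/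
def lowerPSeriesGrp (p : ℕ) (G : Type*) [Group G] : ℕ → Subgroup G
  | 0 => ⊤
  | (i + 1) =>
      Subgroup.closure ((fun g => g ^ p) '' (lowerPSeriesGrp p G i : Set G)) ⊔
        ⁅lowerPSeriesGrp p G i, (⊤ : Subgroup G)⁆


/-! ### Auxiliary lemmas for the proof -/

open scoped commutatorElement

section GenericAux

variable {G : Type*} [Group G]

theorem mem_lcs_succ_left {d : ℕ} {m : G} (hm : m ∈ (⊤ : Subgroup G).lowerCentralSeries d) (g : G) :
    ⁅m, g⁆ ∈ (⊤ : Subgroup G).lowerCentralSeries (d + 1) := by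
  rw [Subgroup.lowerCentralSeries_succ]
  exact Subgroup.commutator_mem_commutator hm (Subgroup.mem_top g)

/-- The set of elements commuting with everything modulo a normal subgroup `Γ`. -/
def centralizerMod (Γ : Subgroup G) [hΓ : Γ.Normal] : Subgroup G where
  carrier := {h | ∀ g, ⁅h, g⁆ ∈ Γ}
  one_mem' := by
    intro g
    have : ⁅(1 : G), g⁆ = 1 := by simp [commutatorElement_def]
    rw [this]; exact Γ.one_mem
  mul_mem' := by
    intro a b ha hb g
    have hid : ⁅a * b, g⁆ = a * ⁅b, g⁆ * a⁻¹ * ⁅a, g⁆ := by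
      simp only [commutatorElement_def]; group
    rw [hid]
    exact Γ.mul_mem (hΓ.conj_mem _ (hb g) a) (ha g)
  inv_mem' := by
    intro a ha g
    have hid : ⁅a⁻¹, g⁆ = a⁻¹ * ⁅a, g⁆⁻¹ * (a⁻¹)⁻¹ := by
      simp only [commutatorElement_def]; group
    rw [hid]
    exact hΓ.conj_mem _ (Γ.inv_mem (ha g)) a⁻¹

theorem comm_pow_mem_lcs {p : ℕ} {N : Subgroup G} (hN : ∀ n ∈ N, n ^ p = 1)
    {u m : G} {d : ℕ} (h1 : ⁅u, m⁆ ∈ (⊤ : Subgroup G).lowerCentralSeries d) (h2 : ⁅u, m⁆ ∈ N) :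
    ⁅u ^ p, m⁆ ∈ (⊤ : Subgroup G).lowerCentralSeries (d + 1) := by
  have key : ∀ c : ℕ, ∃ z ∈ (⊤ : Subgroup G).lowerCentralSeries (d + 1), ⁅u ^ c, m⁆ = ⁅u, m⁆ ^ c * z := by
    intro c
    induction c with
    | zero => exact ⟨1, Subgroup.one_mem _, by simp⟩
    | succ c ih =>
      obtain ⟨z, hz, hc⟩ := ih
      have hz1 : ⁅⁅u, m⁆⁻¹, u ^ c⁆ ∈ (⊤ : Subgroup G).lowerCentralSeries (d + 1) :=
        mem_lcs_succ_left (Subgroup.inv_mem _ h1) _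
      have hz' : z = (⁅u, m⁆ ^ c)⁻¹ * ⁅u ^ c, m⁆ := by
        rw [hc, ← mul_assoc, inv_mul_cancel, one_mul]
      refine ⟨(⁅u, m⁆ ^ c)⁻¹ * ⁅⁅u, m⁆⁻¹, u ^ c⁆ * ((⁅u, m⁆ ^ c)⁻¹)⁻¹ * z,
        Subgroup.mul_mem _
          ((inferInstance : ((⊤ : Subgroup G).lowerCentralSeries (d + 1)).Normal).conj_mem _ hz1 (⁅u, m⁆ ^ c)⁻¹) hz, ?_⟩
      rw [hz']
      simp only [commutatorElement_def]
      group
  obtain ⟨z, hz, hzz⟩ := key p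
  rw [hzz, hN _ h2, one_mul]
  exact hz

theorem mul_pow_mem_lcs {u n : G} {d : ℕ} (hn : n ∈ (⊤ : Subgroup G).lowerCentralSeries d) (c : ℕ) :
    ∃ z ∈ (⊤ : Subgroup G).lowerCentralSeries (d + 1), (u * n) ^ c = u ^ c * n ^ c * z := by
  induction c with
  | zero => exact ⟨1, Subgroup.one_mem _, by simp⟩
  | succ c ih =>
    obtain ⟨z, hz, hc⟩ := ih
    have hz1 : ⁅n⁻¹, (u ^ c)⁻¹⁆ ∈ (⊤ : Subgroup G).lowerCentralSeries (d + 1) :=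
      mem_lcs_succ_left (Subgroup.inv_mem _ hn) _
    have hz' : z = (n ^ c)⁻¹ * ((u ^ c)⁻¹ * (u * n) ^ c) := by
      rw [hc]; group
    refine ⟨(n ^ c)⁻¹ * ⁅n⁻¹, (u ^ c)⁻¹⁆ * ((n ^ c)⁻¹)⁻¹ * z,
      Subgroup.mul_mem _
        ((inferInstance : ((⊤ : Subgroup G).lowerCentralSeries (d + 1)).Normal).conj_mem _ hz1 (n ^ c)⁻¹) hz, ?_⟩
    rw [hz']
    simp only [commutatorElement_def]
    group

theorem comm_mul_right_of_commute {u v n : G} (h : Commute u v) : ⁅u, n * v⁆ = ⁅u, n⁆ := by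
  have h1 : ⁅u, v⁆ = 1 := commutatorElement_eq_one_iff_commute.mpr h
  have hid : ⁅u, n * v⁆ = ⁅u, n⁆ * (n * ⁅u, v⁆ * n⁻¹) := by
    simp only [commutatorElement_def]; group
  rw [hid, h1]
  group

end GenericAux

section GkAux

variable (p k : ℕ)

theorem freeClassTwoExpP_pow_eq_one {α : Type} (g : FreeClassTwoExpP p α) : g ^ p = 1 := by
  refine QuotientGroup.induction_on (C := fun g => g ^ p = 1) g ?_
  intro w
  show (QuotientGroup.mk w : FreeGroup α ⧸ freeRelSubgroup p α) ^ p = 1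
  rw [← QuotientGroup.mk_pow, QuotientGroup.eq_one_iff]
  exact Subgroup.mem_sup_right (Subgroup.subset_closure ⟨w, rfl⟩)

/-- The semidirect product underlying `G_k`, with its native instances. -/
abbrev Gsd : Type :=
  FreeClassTwoExpP p (ZMod (p ^ k)) ⋊[shiftAction' p (p ^ k)] Multiplicative (ZMod (p ^ k))

/-- The element `x` in the semidirect product world. -/
abbrev xsd : Gsd p k := SemidirectProduct.inr (Multiplicative.ofAdd (1 : ZMod (p ^ k)))

/-- The copy of `M` inside `G_k`. -/
def NGk : Subgroup (Gsd p k) := (SemidirectProduct.inl (φ := shiftAction' p (p ^ k))).range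

theorem NGk_eq : NGk p k = (SemidirectProduct.rightHom (φ := shiftAction' p (p ^ k))).ker :=
  SemidirectProduct.range_inl_eq_ker_rightHom

instance NGk_normal : (NGk p k).Normal := by
  rw [NGk_eq]
  exact MonoidHom.normal_ker _

theorem NGk_pow_eq_one : ∀ n ∈ NGk p k, n ^ p = 1 := by
  rintro _ ⟨m, rfl⟩
  rw [← map_pow, freeClassTwoExpP_pow_eq_one, map_one]

theorem lcs_one_le_NGk : (⊤ : Subgroup (Gsd p k)).lowerCentralSeries 1 ≤ NGk p k := by
  have h : (⊤ : Subgroup (Gsd p k)).lowerCentralSeries 1 = ⁅(⊤ : Subgroup (Gsd p k)), ⊤⁆ := by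
    exact Subgroup.lowerCentralSeries_succ _ 0
  refine le_trans (le_of_eq h) (Subgroup.commutator_le.mpr ?_)
  intro a _ b _
  rw [NGk_eq, MonoidHom.mem_ker, map_commutatorElement]
  exact commutatorElement_eq_one_iff_commute.mpr (mul_comm _ _)

theorem inr_eq_pow [NeZero (p ^ k)] (r : Multiplicative (ZMod (p ^ k))) :
    ∃ c : ℕ, (SemidirectProduct.inr r : Gsd p k) = xsd p k ^ c := by
  refine ⟨(Multiplicative.toAdd r).val, ?_⟩
  rw [xsd, ← map_pow]
  congr 1
  rw [← ofAdd_nsmul, nsmul_eq_mul, mul_one, ZMod.natCast_rightInverse _, ofAdd_toAdd]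

theorem comm_x_pow_mem (s : ℕ) {n : Gsd p k} (hn : n ∈ NGk p k) :
    ⁅xsd p k ^ p ^ s, n⁆ ∈ (⊤ : Subgroup (Gsd p k)).lowerCentralSeries (s + 1) := by
  induction s with
  | zero =>
    rw [pow_zero, pow_one]
    exact mem_lcs_succ_left (Subgroup.mem_top (xsd p k)) n
  | succ s ih =>
    have h2 : ⁅xsd p k ^ p ^ s, n⁆ ∈ NGk p k := by
      rw [commutatorElement_def]
      exact Subgroup.mul_mem _ ((NGk_normal p k).conj_mem _ hn _) (Subgroup.inv_mem _ hn)
    rw [pow_succ, pow_mul]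
    exact comm_pow_mem_lcs (NGk_pow_eq_one p k) ih h2

theorem key_comm (s : ℕ) (g : Gsd p k) :
    ⁅xsd p k ^ p ^ s, g⁆ ∈ (⊤ : Subgroup (Gsd p k)).lowerCentralSeries (s + 1) := by
  have hc : Commute (xsd p k ^ p ^ s)
      (SemidirectProduct.inr (SemidirectProduct.right g) : Gsd p k) := by
    have := (Commute.all ((Multiplicative.ofAdd (1 : ZMod (p ^ k))) ^ p ^ s)
      (SemidirectProduct.right g)).map
      (SemidirectProduct.inr : Multiplicative (ZMod (p ^ k)) →* Gsd p k)
    rwa [map_pow] at this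
  have hg : ⁅xsd p k ^ p ^ s, g⁆ =
      ⁅xsd p k ^ p ^ s, (SemidirectProduct.inl (SemidirectProduct.left g) : Gsd p k)⁆ := by
    conv_lhs => rw [← SemidirectProduct.inl_left_mul_inr_right g]
    exact comm_mul_right_of_commute hc
  rw [hg]
  exact comm_x_pow_mem p k s ⟨_, rfl⟩

theorem dec_mem [NeZero (p ^ k)] (j : ℕ) {h : Gsd p k}
    (hh : h ∈ Subgroup.closure {xsd p k ^ p ^ j} ⊔ (⊤ : Subgroup (Gsd p k)).lowerCentralSeries j) :
    ∃ (t : ℤ) (n : Gsd p k), n ∈ (⊤ : Subgroup (Gsd p k)).lowerCentralSeries j ∧ n ∈ NGk p k ∧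
      h = (xsd p k ^ p ^ j) ^ t * n := by
  cases j with
  | zero =>
    obtain ⟨c, hcr⟩ := inr_eq_pow p k (SemidirectProduct.right h)
    set v : Gsd p k := SemidirectProduct.inr (SemidirectProduct.right h) with hv
    set L : Gsd p k := SemidirectProduct.inl (SemidirectProduct.left h) with hL
    refine ⟨(c : ℤ), v⁻¹ * L * v, Subgroup.mem_top _, ?_, ?_⟩
    · have := (NGk_normal p k).conj_mem L ⟨_, rfl⟩ v⁻¹
      rwa [inv_inv] at this
    · rw [pow_zero, pow_one, zpow_natCast, ← hcr]
      have hLv : h = L * v := (SemidirectProduct.inl_left_mul_inr_right h).symm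
      rw [hLv]
      group
  | succ j' =>
    have hh' : h ∈ (↑(Subgroup.closure {xsd p k ^ p ^ (j' + 1)} ⊔
        (⊤ : Subgroup (Gsd p k)).lowerCentralSeries (j' + 1)) : Set (Gsd p k)) := hh
    rw [Subgroup.mul_normal] at hh'
    obtain ⟨c, hc, m, hm, rfl⟩ := hh'
    obtain ⟨t, ht⟩ := Subgroup.mem_closure_singleton.mp hc
    exact ⟨t, m, hm,
      lcs_one_le_NGk p k (Subgroup.lowerCentralSeries_antitone _ (by omega) hm), by rw [ht]⟩

set_option maxHeartbeats 1600000 in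
theorem gk_main [NeZero (p ^ k)] (j : ℕ) :
    lowerPSeriesGrp p (Gsd p k) j =
      Subgroup.closure {xsd p k ^ p ^ j} ⊔ (⊤ : Subgroup (Gsd p k)).lowerCentralSeries j := by
  induction j with
  | zero => simp [lowerPSeriesGrp, Subgroup.lowerCentralSeries_zero]
  | succ j ih =>
    rw [lowerPSeriesGrp, ih]
    apply le_antisymm
    · apply sup_le
      · rw [Subgroup.closure_le]
        rintro _ ⟨h, hh, rfl⟩
        simp only [SetLike.mem_coe] at hh ⊢
        obtain ⟨t, n, hn, hnN, rfl⟩ := dec_mem p k j hh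
        obtain ⟨z, hz, hzz⟩ := mul_pow_mem_lcs (u := (xsd p k ^ p ^ j) ^ t) hn p
        rw [hzz, NGk_pow_eq_one p k n hnN, mul_one]
        have hu : ((xsd p k ^ p ^ j) ^ t) ^ p = (xsd p k ^ p ^ (j + 1)) ^ t := by
          rw [← zpow_natCast _ p, ← zpow_mul, mul_comm, zpow_mul, zpow_natCast,
            pow_succ, pow_mul]
        rw [hu]
        have h1 : xsd p k ^ p ^ (j + 1) ∈ Subgroup.closure ({xsd p k ^ p ^ (j + 1)} : Set (Gsd p k)) :=
          Subgroup.subset_closure (Set.mem_singleton _)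
        have h2 : (xsd p k ^ p ^ (j + 1)) ^ t ∈ Subgroup.closure ({xsd p k ^ p ^ (j + 1)} : Set (Gsd p k)) :=
          Subgroup.zpow_mem _ h1 t
        exact Subgroup.mul_mem _ (Subgroup.mem_sup_left h2) (Subgroup.mem_sup_right hz)
      · refine le_trans ?_ le_sup_right
        refine Subgroup.commutator_le.mpr ?_
        intro g1 hg1 g2 _
        have hsub : Subgroup.closure {xsd p k ^ p ^ j} ⊔ (⊤ : Subgroup (Gsd p k)).lowerCentralSeries j ≤
            centralizerMod ((⊤ : Subgroup (Gsd p k)).lowerCentralSeries (j + 1)) := by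
          apply sup_le
          · rw [Subgroup.closure_le]
            intro y hy
            rw [Set.mem_singleton_iff] at hy
            subst hy
            intro g
            exact key_comm p k j g
          · intro y hy g
            exact mem_lcs_succ_left hy g
        exact hsub hg1 g2
    · apply sup_le
      · rw [Subgroup.closure_le]
        intro y hy
        rw [Set.mem_singleton_iff] at hy
        subst hy
        have hmm : xsd p k ^ p ^ j ∈ ((Subgroup.closure {xsd p k ^ p ^ j} ⊔ (⊤ : Subgroup (Gsd p k)).lowerCentralSeries j : Subgroup (Gsd p k)) : Set (Gsd p k)) :=
          Subgroup.mem_sup_left (Subgroup.subset_closure (Set.mem_singleton _))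
        have h2 : xsd p k ^ p ^ (j + 1) ∈ Subgroup.closure ((fun g => g ^ p) '' ((Subgroup.closure {xsd p k ^ p ^ j} ⊔ (⊤ : Subgroup (Gsd p k)).lowerCentralSeries j : Subgroup (Gsd p k)) : Set (Gsd p k))) :=
          Subgroup.subset_closure ⟨xsd p k ^ p ^ j, hmm, by show (xsd p k ^ p ^ j) ^ p = xsd p k ^ p ^ (j + 1); rw [← pow_mul, ← pow_succ]⟩
        exact Subgroup.mem_sup_left h2
      · rw [Subgroup.lowerCentralSeries_succ]
        exact le_trans (Subgroup.commutator_mono le_sup_right le_rfl) le_sup_right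

end GkAux

/-- Proposition 3.6:  for `1 ≤ i ≤ 2p^k − 1`, the lower `p`-series of `G_k = A ⋉ M`
satisfies `P_i(G_k) = ⟨x^{p^{i−1}}⟩ γ_i(G_k)`, where `x` is the image in `G_k` of the
generator `1` of `A = ℤ/p^k`.  Here `P_i(G_k) = lowerPSeriesGrp p (GkGroup p k) (i-1)` and
`γ_i(G_k) = lowerCentralSeries (GkGroup p k) (i-1)`. -/
theorem GkGroup_lowerPSeries (p k : ℕ) (hp : p.Prime) (hodd : Odd p) (hk : 1 ≤ k) :
    ∀ i : ℕ, 1 ≤ i → i ≤ 2 * p ^ k - 1 →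
      lowerPSeriesGrp p (GkGroup p k) (i - 1) =
        Subgroup.closure {GkX p k ^ p ^ (i - 1)} ⊔
          (⊤ : Subgroup (GkGroup p k)).lowerCentralSeries (i - 1) := by
  haveI : NeZero (p ^ k) := ⟨pow_ne_zero k hp.ne_zero⟩
  intro i _ _
  exact gk_main p k (i - 1)
end

section
/- Let p be a prime, let G be a group, x ∈ G, and let z(i,j) ∈ G for i, j ≥ 1 be a family of elements such that any two elements z(i,j) and z(k,l) commute, z(i,j)^p = 1 for all i, j ≥ 1, and [z(i,j), x] = z(i+1,j) · z(i,j+1) · z(i+1,j+1) for all i, j ≥ 1. Then for all i, j ≥ 1 and all k ≥ 0: [z(i,j), x^{p^k}] = z(i + p^k, j) · z(i, j + p^k) · z(i + p^k, j + p^k). -/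
open MvPolynomial Finset

section CorAux

variable {H : Type*} [CommGroup H]

private lemma pow_mod_eq' {M : Type*} [Monoid M] (h : M) {p : ℕ} (hh : h ^ p = 1) (n : ℕ) :
    h ^ (n % p) = h ^ n := by
  conv_rhs => rw [← Nat.mod_add_div n p, pow_add, pow_mul, hh, one_pow, mul_one]

private lemma pow_val_add' {p : ℕ} [NeZero p] (h : H) (hh : h ^ p = 1) (a b : ZMod p) :
    h ^ (a + b).val = h ^ a.val * h ^ b.val := by
  rw [ZMod.val_add, ← pow_add, pow_mod_eq' h hh]

/-- product map from polynomials over `ZMod p` to a commutative group -/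
private noncomputable def Zfun (p : ℕ) (w : (Fin 2 →₀ ℕ) → H)
    (q : MvPolynomial (Fin 2) (ZMod p)) : H :=
  ∏ m ∈ q.support, w m ^ (q.coeff m).val

private lemma Zfun_superset (p : ℕ) (w : (Fin 2 →₀ ℕ) → H) (q : MvPolynomial (Fin 2) (ZMod p))
    (T : Finset (Fin 2 →₀ ℕ)) (hT : q.support ⊆ T) :
    Zfun p w q = ∏ m ∈ T, w m ^ (q.coeff m).val := by
  refine Finset.prod_subset hT fun m _ hm => ?_
  rw [MvPolynomial.notMem_support_iff.mp hm, ZMod.val_zero, pow_zero]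

private lemma Zfun_add (p : ℕ) [NeZero p] (w : (Fin 2 →₀ ℕ) → H) (hw : ∀ m, w m ^ p = 1)
    (q₁ q₂ : MvPolynomial (Fin 2) (ZMod p)) :
    Zfun p w (q₁ + q₂) = Zfun p w q₁ * Zfun p w q₂ := by
  classical
  rw [Zfun_superset p w _ (q₁.support ∪ q₂.support) MvPolynomial.support_add,
    Zfun_superset p w q₁ (q₁.support ∪ q₂.support) Finset.subset_union_left,
    Zfun_superset p w q₂ (q₁.support ∪ q₂.support) Finset.subset_union_right,
    ← Finset.prod_mul_distrib]
  exact Finset.prod_congr rfl fun m _ => by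
    rw [MvPolynomial.coeff_add]; exact pow_val_add' _ (hw m) _ _

private lemma Zfun_monomial (p : ℕ) (w : (Fin 2 →₀ ℕ) → H) (m : Fin 2 →₀ ℕ) (c : ZMod p) :
    Zfun p w (monomial m c) = w m ^ c.val := by
  classical
  rcases eq_or_ne c 0 with rfl | hc
  · simp [Zfun, support_monomial]
  · simp [Zfun, support_monomial, hc, coeff_monomial]

end CorAux

def cmt {G : Type*} [Group G] (u v : G) : G := u⁻¹ * v⁻¹ * u * v

/-- Corollary 4.5:  if the elements `z i j` (for `i, j ≥ 1`) pairwise commute, have order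
dividing the prime `p`, and satisfy `[z i j, x] = z (i+1) j · z i (j+1) · z (i+1) (j+1)`,
then `[z i j, x^{p^k}] = z (i+p^k) j · z i (j+p^k) · z (i+p^k) (j+p^k)`. -/
theorem commutator_pow_prime_pow_formula (p : ℕ) (hp : p.Prime) {G : Type*} [Group G] (x : G)
    (z : ℕ → ℕ → G)
    (hcomm : ∀ i j k l, 1 ≤ i → 1 ≤ j → 1 ≤ k → 1 ≤ l → Commute (z i j) (z k l))
    (horder : ∀ i j, 1 ≤ i → 1 ≤ j → z i j ^ p = 1)
    (hrel : ∀ i j, 1 ≤ i → 1 ≤ j →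
      cmt (z i j) x = z (i + 1) j * z i (j + 1) * z (i + 1) (j + 1)) :
    ∀ i j k, 1 ≤ i → 1 ≤ j →
      cmt (z i j) (x ^ p ^ k) =
        z (i + p ^ k) j * z i (j + p ^ k) * z (i + p ^ k) (j + p ^ k) := by
  classical
  haveI : Fact p.Prime := ⟨hp⟩
  haveI : NeZero p := ⟨hp.ne_zero⟩
  haveI : Fact (1 < p) := ⟨hp.one_lt⟩
  set S : Set G := {g | ∃ i j, 1 ≤ i ∧ 1 ≤ j ∧ z i j = g} with hS
  have hScomm : ∀ a ∈ S, ∀ b ∈ S, a * b = b * a := by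
    rintro a ⟨i, j, hi, hj, rfl⟩ b ⟨k, l, hk, hl, rfl⟩
    exact hcomm i j k l hi hj hk hl
  letI : CommGroup (Subgroup.closure S) := Subgroup.closureCommGroupOfComm hScomm
  set ζ : (Fin 2 →₀ ℕ) → Subgroup.closure S := fun m =>
    ⟨z (1 + m 0) (1 + m 1),
      Subgroup.subset_closure ⟨1 + m 0, 1 + m 1, Nat.le_add_right 1 _, Nat.le_add_right 1 _, rfl⟩⟩
    with hζ
  have happ : ∀ m : Fin 2 →₀ ℕ, (ζ m : G) = z (1 + m 0) (1 + m 1) := fun _ => rfl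
  have hζp : ∀ m, ζ m ^ p = 1 := fun m =>
    Subtype.ext (horder _ _ (Nat.le_add_right 1 _) (Nat.le_add_right 1 _))
  let Z : MvPolynomial (Fin 2) (ZMod p) → Subgroup.closure S := Zfun p ζ
  have Zadd : ∀ q₁ q₂, Z (q₁ + q₂) = Z q₁ * Z q₂ := fun q₁ q₂ => Zfun_add p ζ hζp q₁ q₂
  have Zmono : ∀ (m : Fin 2 →₀ ℕ) (c : ZMod p), Z (monomial m c) = ζ m ^ c.val :=
    fun m c => Zfun_monomial p ζ m c
  -- conjugation of the generators
  have hconj_z : ∀ i j, 1 ≤ i → 1 ≤ j →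
      x⁻¹ * z i j * x = z i j * (z (i + 1) j * (z i (j + 1) * z (i + 1) (j + 1))) := by
    intro i j hi hj
    have h := hrel i j hi hj
    unfold cmt at h
    have h2 : x⁻¹ * z i j * x = z i j * ((z i j)⁻¹ * x⁻¹ * z i j * x) := by group
    rw [h2, h]
    group
  have hcp : ∀ (g : G) (n : ℕ), x⁻¹ * g ^ n * x = (x⁻¹ * g * x) ^ n := by
    intro g n
    induction n with
    | zero => simp
    | succ n ih => rw [pow_succ, pow_succ, ← ih]; group
  -- key conjugation formula for Z
  have key1 : ∀ q : MvPolynomial (Fin 2) (ZMod p),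
      x⁻¹ * (Z q : G) * x = ((Z ((1 + X 0) * (1 + X 1) * q) : Subgroup.closure S) : G) := by
    intro q
    induction q using MvPolynomial.induction_on' with
    | add q₁ q₂ ih₁ ih₂ =>
      rw [mul_add, Zadd, Zadd]
      simp only [Subgroup.coe_mul]
      rw [← ih₁, ← ih₂]
      group
    | monomial m c =>
      rw [Zmono]
      have hexp : ((1 : MvPolynomial (Fin 2) (ZMod p)) + X 0) * (1 + X 1) * monomial m c
          = monomial m c + monomial (Finsupp.single 0 1 + m) c
            + (monomial (Finsupp.single 1 1 + m) c
              + monomial (Finsupp.single 0 1 + (Finsupp.single 1 1 + m)) c) := by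
        have h0 : (X (0 : Fin 2) : MvPolynomial (Fin 2) (ZMod p))
            = monomial (Finsupp.single 0 1) 1 := rfl
        have h1 : (X (1 : Fin 2) : MvPolynomial (Fin 2) (ZMod p))
            = monomial (Finsupp.single 1 1) 1 := rfl
        calc ((1 : MvPolynomial (Fin 2) (ZMod p)) + X 0) * (1 + X 1) * monomial m c
            = monomial m c + X 0 * monomial m c
              + (X 1 * monomial m c + X 0 * (X 1 * monomial m c)) := by ring
          _ = _ := by rw [h0, h1]; simp [monomial_mul]
      rw [hexp, Zadd, Zadd, Zadd, Zmono, Zmono, Zmono, Zmono]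
      have hc1 : x⁻¹ * (ζ m : G) * x
          = ((ζ m * ζ (Finsupp.single 0 1 + m) * (ζ (Finsupp.single 1 1 + m)
              * ζ (Finsupp.single 0 1 + (Finsupp.single 1 1 + m))) : Subgroup.closure S) : G) := by
        simp only [Subgroup.coe_mul, happ]
        rw [hconj_z (1 + m 0) (1 + m 1) (Nat.le_add_right 1 _) (Nat.le_add_right 1 _)]
        rw [show 1 + ((Finsupp.single (0 : Fin 2) 1 : Fin 2 →₀ ℕ) + m) 0 = 1 + m 0 + 1 from by
            simp only [Finsupp.add_apply, Finsupp.single_eq_same]; omega,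
          show 1 + ((Finsupp.single (0 : Fin 2) 1 : Fin 2 →₀ ℕ) + m) 1 = 1 + m 1 from by
            simp only [Finsupp.add_apply,
              Finsupp.single_eq_of_ne' (by decide : (0 : Fin 2) ≠ 1)]; omega,
          show 1 + ((Finsupp.single (1 : Fin 2) 1 : Fin 2 →₀ ℕ) + m) 0 = 1 + m 0 from by
            simp only [Finsupp.add_apply,
              Finsupp.single_eq_of_ne' (by decide : (1 : Fin 2) ≠ 0)]; omega,
          show 1 + ((Finsupp.single (1 : Fin 2) 1 : Fin 2 →₀ ℕ) + m) 1 = 1 + m 1 + 1 from by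
            simp only [Finsupp.add_apply, Finsupp.single_eq_same]; omega,
          show 1 + ((Finsupp.single (0 : Fin 2) 1 : Fin 2 →₀ ℕ) + ((Finsupp.single (1 : Fin 2) 1 : Fin 2 →₀ ℕ) + m)) 0
              = 1 + m 0 + 1 from by
            simp only [Finsupp.add_apply, Finsupp.single_eq_same,
              Finsupp.single_eq_of_ne' (by decide : (1 : Fin 2) ≠ 0)]; omega,
          show 1 + ((Finsupp.single (0 : Fin 2) 1 : Fin 2 →₀ ℕ) + ((Finsupp.single (1 : Fin 2) 1 : Fin 2 →₀ ℕ) + m)) 1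
              = 1 + m 1 + 1 from by
            simp only [Finsupp.add_apply, Finsupp.single_eq_same,
              Finsupp.single_eq_of_ne' (by decide : (0 : Fin 2) ≠ 1)]; omega]
        exact (mul_assoc _ _ _).symm
      rw [SubmonoidClass.coe_pow, hcp, hc1, ← SubmonoidClass.coe_pow]
      congr 1
      rw [mul_pow, mul_pow, mul_pow]
  -- iterate
  have key2 : ∀ (n : ℕ) (q : MvPolynomial (Fin 2) (ZMod p)),
      (x ^ n)⁻¹ * (Z q : G) * x ^ n
        = ((Z (((1 + X 0) * (1 + X 1)) ^ n * q) : Subgroup.closure S) : G) := by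
    intro n
    induction n with
    | zero => intro q; simp
    | succ n ih =>
      intro q
      have hstep : (x ^ (n + 1))⁻¹ * (Z q : G) * x ^ (n + 1)
          = x⁻¹ * ((x ^ n)⁻¹ * (Z q : G) * x ^ n) * x := by
        rw [pow_succ]; group
      rw [hstep, ih, key1]
      have hq : ((1 : MvPolynomial (Fin 2) (ZMod p)) + X 0) * (1 + X 1)
            * ((((1 : MvPolynomial (Fin 2) (ZMod p)) + X 0) * (1 + X 1)) ^ n * q)
          = (((1 : MvPolynomial (Fin 2) (ZMod p)) + X 0) * (1 + X 1)) ^ (n + 1) * q := by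
        rw [pow_succ]; ring
      rw [hq]
  -- conclusion
  intro i j k hi hj
  set m₀ : Fin 2 →₀ ℕ := Finsupp.single 0 (i - 1) + Finsupp.single 1 (j - 1) with hm₀
  have hzij : z i j = (ζ m₀ : G) := by
    rw [happ,
      show 1 + m₀ 0 = i from by
        simp only [hm₀, Finsupp.add_apply, Finsupp.single_eq_same,
          Finsupp.single_eq_of_ne' (by decide : (1 : Fin 2) ≠ 0)]; omega,
      show 1 + m₀ 1 = j from by
        simp only [hm₀, Finsupp.add_apply, Finsupp.single_eq_same,
          Finsupp.single_eq_of_ne' (by decide : (0 : Fin 2) ≠ 1)]; omega]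
  have hmono : z i j = (Z (monomial m₀ 1) : G) := by
    rw [Zmono, ZMod.val_one, pow_one, hzij]
  have hupow : (((1 : MvPolynomial (Fin 2) (ZMod p)) + X 0) * (1 + X 1)) ^ p ^ k
        * monomial m₀ 1
      = monomial m₀ 1 + monomial (Finsupp.single 0 (p ^ k) + m₀) 1
        + (monomial (Finsupp.single 1 (p ^ k) + m₀) 1
          + monomial (Finsupp.single 0 (p ^ k) + (Finsupp.single 1 (p ^ k) + m₀)) 1) := by
    rw [mul_pow, add_pow_char_pow, add_pow_char_pow, one_pow]
    calc ((1 : MvPolynomial (Fin 2) (ZMod p)) + X 0 ^ p ^ k) * (1 + X 1 ^ p ^ k) * monomial m₀ 1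
        = monomial m₀ 1 + X 0 ^ p ^ k * monomial m₀ 1
          + (X 1 ^ p ^ k * monomial m₀ 1 + X 0 ^ p ^ k * (X 1 ^ p ^ k * monomial m₀ 1)) := by
          ring
      _ = _ := by simp [X_pow_eq_monomial, monomial_mul]
  have hA : (ζ (Finsupp.single 0 (p ^ k) + m₀) : G) = z (i + p ^ k) j := by
    rw [happ,
      show 1 + ((Finsupp.single (0 : Fin 2) (p ^ k) : Fin 2 →₀ ℕ) + m₀) 0 = i + p ^ k from by
        simp only [hm₀, Finsupp.add_apply, Finsupp.single_eq_same,
          Finsupp.single_eq_of_ne' (by decide : (1 : Fin 2) ≠ 0)]; omega,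
      show 1 + ((Finsupp.single (0 : Fin 2) (p ^ k) : Fin 2 →₀ ℕ) + m₀) 1 = j from by
        simp only [hm₀, Finsupp.add_apply, Finsupp.single_eq_same,
          Finsupp.single_eq_of_ne' (by decide : (0 : Fin 2) ≠ 1)]; omega]
  have hB : (ζ (Finsupp.single 1 (p ^ k) + m₀) : G) = z i (j + p ^ k) := by
    rw [happ,
      show 1 + ((Finsupp.single (1 : Fin 2) (p ^ k) : Fin 2 →₀ ℕ) + m₀) 0 = i from by
        simp only [hm₀, Finsupp.add_apply, Finsupp.single_eq_same,
          Finsupp.single_eq_of_ne' (by decide : (1 : Fin 2) ≠ 0)]; omega,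
      show 1 + ((Finsupp.single (1 : Fin 2) (p ^ k) : Fin 2 →₀ ℕ) + m₀) 1 = j + p ^ k from by
        simp only [hm₀, Finsupp.add_apply, Finsupp.single_eq_same,
          Finsupp.single_eq_of_ne' (by decide : (0 : Fin 2) ≠ 1)]; omega]
  have hC : (ζ (Finsupp.single 0 (p ^ k) + (Finsupp.single 1 (p ^ k) + m₀)) : G)
      = z (i + p ^ k) (j + p ^ k) := by
    rw [happ,
      show 1 + ((Finsupp.single (0 : Fin 2) (p ^ k) : Fin 2 →₀ ℕ)
          + ((Finsupp.single (1 : Fin 2) (p ^ k) : Fin 2 →₀ ℕ) + m₀)) 0 = i + p ^ k from by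
        simp only [hm₀, Finsupp.add_apply, Finsupp.single_eq_same,
          Finsupp.single_eq_of_ne' (by decide : (1 : Fin 2) ≠ 0)]; omega,
      show 1 + ((Finsupp.single (0 : Fin 2) (p ^ k) : Fin 2 →₀ ℕ)
          + ((Finsupp.single (1 : Fin 2) (p ^ k) : Fin 2 →₀ ℕ) + m₀)) 1 = j + p ^ k from by
        simp only [hm₀, Finsupp.add_apply, Finsupp.single_eq_same,
          Finsupp.single_eq_of_ne' (by decide : (0 : Fin 2) ≠ 1)]; omega]
  have main : (x ^ p ^ k)⁻¹ * z i j * x ^ p ^ k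
      = z i j * (z (i + p ^ k) j * (z i (j + p ^ k) * z (i + p ^ k) (j + p ^ k))) := by
    conv_lhs => rw [hmono]
    rw [key2 (p ^ k) (monomial m₀ 1), hupow, Zadd, Zadd, Zadd,
      Zmono, Zmono, Zmono, Zmono, ZMod.val_one, pow_one, pow_one, pow_one, pow_one]
    simp only [Subgroup.coe_mul, happ]
    rw [show 1 + m₀ 0 = i from by
        simp only [hm₀, Finsupp.add_apply, Finsupp.single_eq_same,
          Finsupp.single_eq_of_ne' (by decide : (1 : Fin 2) ≠ 0)]; omega,
      show 1 + m₀ 1 = j from by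
        simp only [hm₀, Finsupp.add_apply, Finsupp.single_eq_same,
          Finsupp.single_eq_of_ne' (by decide : (0 : Fin 2) ≠ 1)]; omega,
      show 1 + ((Finsupp.single (0 : Fin 2) (p ^ k) : Fin 2 →₀ ℕ) + m₀) 0 = i + p ^ k from by
        simp only [hm₀, Finsupp.add_apply, Finsupp.single_eq_same,
          Finsupp.single_eq_of_ne' (by decide : (1 : Fin 2) ≠ 0)]; omega,
      show 1 + ((Finsupp.single (0 : Fin 2) (p ^ k) : Fin 2 →₀ ℕ) + m₀) 1 = j from by
        simp only [hm₀, Finsupp.add_apply, Finsupp.single_eq_same,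
          Finsupp.single_eq_of_ne' (by decide : (0 : Fin 2) ≠ 1)]; omega,
      show 1 + ((Finsupp.single (1 : Fin 2) (p ^ k) : Fin 2 →₀ ℕ) + m₀) 0 = i from by
        simp only [hm₀, Finsupp.add_apply, Finsupp.single_eq_same,
          Finsupp.single_eq_of_ne' (by decide : (1 : Fin 2) ≠ 0)]; omega,
      show 1 + ((Finsupp.single (1 : Fin 2) (p ^ k) : Fin 2 →₀ ℕ) + m₀) 1 = j + p ^ k from by
        simp only [hm₀, Finsupp.add_apply, Finsupp.single_eq_same,
          Finsupp.single_eq_of_ne' (by decide : (0 : Fin 2) ≠ 1)]; omega,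
      show 1 + ((Finsupp.single (0 : Fin 2) (p ^ k) : Fin 2 →₀ ℕ)
          + ((Finsupp.single (1 : Fin 2) (p ^ k) : Fin 2 →₀ ℕ) + m₀)) 0 = i + p ^ k from by
        simp only [hm₀, Finsupp.add_apply, Finsupp.single_eq_same,
          Finsupp.single_eq_of_ne' (by decide : (1 : Fin 2) ≠ 0)]; omega,
      show 1 + ((Finsupp.single (0 : Fin 2) (p ^ k) : Fin 2 →₀ ℕ)
          + ((Finsupp.single (1 : Fin 2) (p ^ k) : Fin 2 →₀ ℕ) + m₀)) 1 = j + p ^ k from by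
        simp only [hm₀, Finsupp.add_apply, Finsupp.single_eq_same,
          Finsupp.single_eq_of_ne' (by decide : (0 : Fin 2) ≠ 1)]; omega]
    exact mul_assoc _ _ _
  unfold cmt
  rw [show (z i j)⁻¹ * (x ^ p ^ k)⁻¹ * z i j * x ^ p ^ k
      = (z i j)⁻¹ * ((x ^ p ^ k)⁻¹ * z i j * x ^ p ^ k) by group,
    main, inv_mul_cancel_left, ← mul_assoc]
end
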